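/- (MGP limit for common-shock constructions X = E + U.) Let E be a unit-exponential random variable and let U = (U_1,…,U_D) be a random vector in ℝ^D, independent of E, such that 𝔼[exp(Q)] < ∞ where Q = max_j U_j. Define X = (X_1,…,X_D) by X_j = E + U_j. Then for every x ∈ ℝ^D: lim_{u→∞} P( X_j ≤ u + x_j for all j | max_j X_j > u ) = 𝔼[ ( exp(Q) − exp(−min_j(x_j − U_j)) )⁺ ] / 𝔼[ exp(Q) ], where (·)⁺ denotes the positive part. (This limit is the distribution function of the standard MGP vector whose generator S is obtained from U via the paper's transformation P(S ≤ s) = 𝔼[exp(Q)·1{U ≤ s + Q·1}]/𝔼[exp(Q)].) -/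

import Mathlib

open MeasureTheory ProbabilityTheory Filter

/-- MGP limit for common-shock constructions `X = E + U`. Let `E` be
unit-exponential, independent of `U = (U_1,…,U_D)`, with `Q = max_j U_j` satisfying
`𝔼[exp Q] < ∞`, and let `X_j = E + U_j`. Then for every `x ∈ ℝ^D`,
`P(∀ j, X_j ≤ u + x_j | max_j X_j > u) → 𝔼[(exp Q − exp (−min_j (x_j − U_j)))⁺]/𝔼[exp Q]`
as `u → ∞`: the limit is the distribution function of the standard MGP vector generated
by `U`. -/
theorem stmt_19
    {Ω : Type*} [MeasureSpace Ω] [IsProbabilityMeasure (ℙ : Measure Ω)]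
    {D : ℕ} (hD : 0 < D)
    (E : Ω → ℝ) (U : Ω → Fin D → ℝ)
    (hEmeas : Measurable E) (hUmeas : Measurable U)
    (hEexp : ∀ t : ℝ, 0 ≤ t → ℙ {ω | t < E ω} = ENNReal.ofReal (Real.exp (-t)))
    (hindep : IndepFun E U ℙ)
    (Q : Ω → ℝ) (hQ : ∀ ω, Q ω = ⨆ j, U ω j)
    (hQint : Integrable (fun ω => Real.exp (Q ω)) ℙ) :
    ∀ x : Fin D → ℝ,
      Tendsto
        (fun u : ℝ =>
          (ℙ[{ω | ∀ j, E ω + U ω j ≤ u + x j} | {ω | u < ⨆ j, (E ω + U ω j)}]).toReal)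
        atTop
        (nhds ((∫ ω, max (Real.exp (Q ω) - Real.exp (-(⨅ j, (x j - U ω j)))) 0 ∂ℙ)
          / ∫ ω, Real.exp (Q ω) ∂ℙ)) := by
  intro x
  haveI : Nonempty (Fin D) := ⟨⟨0, hD⟩⟩
  have hUj : ∀ j, Measurable fun ω => U ω j := fun j => (measurable_pi_apply j).comp hUmeas
  set m : Ω → ℝ := fun ω => ⨅ j, (x j - U ω j) with hm_def
  have hQm : Measurable Q := by
    have : Q = fun ω => ⨆ j, U ω j := funext hQ
    rw [this]; exact Measurable.iSup hUj
  have hmm : Measurable m := Measurable.iInf fun j => measurable_const.sub (hUj j)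
  set ν : Measure ℝ := Measure.map E ℙ with hν_def
  haveI : IsProbabilityMeasure ν := Measure.isProbabilityMeasure_map hEmeas.aemeasurable
  set F : ℝ → ENNReal := fun t => ENNReal.ofReal (Real.exp (-(max t 0))) with hF_def
  have hF_meas : Measurable F :=
    ENNReal.measurable_ofReal.comp (Real.measurable_exp.comp ((measurable_id.max measurable_const).neg))
  have hν_Ioi : ∀ t : ℝ, ν (Set.Ioi t) = F t := by
    intro t
    rw [hν_def, Measure.map_apply hEmeas measurableSet_Ioi]
    have hpre : E ⁻¹' Set.Ioi t = {ω | t < E ω} := rfl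
    rw [hpre]
    rcases le_or_gt 0 t with ht | ht
    · rw [hEexp t ht, hF_def]; simp [max_eq_left ht]
    · have h1 : ℙ {ω | (0:ℝ) < E ω} = 1 := by
        rw [hEexp 0 le_rfl]; simp
      have hsub : {ω | (0:ℝ) < E ω} ⊆ {ω | t < E ω} := fun ω hω => lt_trans ht hω
      have h2 : ℙ {ω | t < E ω} = 1 :=
        le_antisymm prob_le_one (h1 ▸ measure_mono hsub)
      rw [h2, hF_def]; simp [max_eq_right ht.le]
  have hF_anti : ∀ {a b : ℝ}, a ≤ b → F b ≤ F a := by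
    intro a b hab
    exact ENNReal.ofReal_le_ofReal (Real.exp_le_exp.mpr (neg_le_neg (max_le_max hab le_rfl)))
  have hF_ne_top : ∀ t : ℝ, F t ≠ ⊤ := fun t => ENNReal.ofReal_ne_top
  have hν_Ioc : ∀ a b : ℝ, ν (Set.Ioc a b) = F a - F b := by
    intro a b
    rcases le_or_gt a b with hab | hab
    · rw [← Set.Ioi_diff_Ioi,
        measure_diff (Set.Ioi_subset_Ioi hab) measurableSet_Ioi.nullMeasurableSet
          (by rw [hν_Ioi]; exact hF_ne_top b), hν_Ioi, hν_Ioi]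
    · rw [Set.Ioc_eq_empty (not_lt.mpr hab.le), measure_empty, eq_comm, tsub_eq_zero_iff_le]
      exact hF_anti hab.le
  -- key independence formula
  have hkey : ∀ S : Set ((Fin D → ℝ) × ℝ), MeasurableSet S →
      ℙ ((fun ω => (U ω, E ω)) ⁻¹' S) = ∫⁻ ω, ν {e | (U ω, e) ∈ S} ∂ℙ := by
    intro S hS
    have hprod : Measure.map (fun ω => (U ω, E ω)) ℙ = (Measure.map U ℙ).prod ν :=
      (indepFun_iff_map_prod_eq_prod_map_map hUmeas.aemeasurable hEmeas.aemeasurable).mp hindep.symm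
    rw [← Measure.map_apply (hUmeas.prodMk hEmeas) hS, hprod, Measure.prod_apply hS,
      lintegral_map (measurable_measure_prodMk_left hS) hUmeas]
    rfl
  -- set identities
  have hBiff : ∀ (u : ℝ) ω, (u < ⨆ j, (E ω + U ω j)) ↔ u - Q ω < E ω := by
    intro u ω
    have hsup : (⨆ j, (E ω + U ω j)) = E ω + Q ω := by
      rw [hQ]
      exact (Monotone.map_ciSup_of_continuousAt
        (f := fun z => E ω + z) (continuous_const.add continuous_id).continuousAt
        (fun a b hab => by show E ω + a ≤ E ω + b; linarith) (Set.finite_range _).bddAbove).symm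
    rw [hsup]
    constructor <;> intro h <;> linarith
  have hBset : ∀ u : ℝ, {ω | u < ⨆ j, (E ω + U ω j)} = {ω | u - Q ω < E ω} := by
    intro u; ext ω; exact hBiff u ω
  have hAiff : ∀ (u : ℝ) ω, (∀ j, E ω + U ω j ≤ u + x j) ↔ E ω ≤ u + m ω := by
    intro u ω
    constructor
    · intro h
      have h1 : E ω - u ≤ ⨅ j, (x j - U ω j) := le_ciInf fun j => by linarith [h j]
      have h2 : m ω = ⨅ j, (x j - U ω j) := rfl
      linarith [h2 ▸ h1]
    · intro h j
      have h2 : (⨅ j, (x j - U ω j)) ≤ x j - U ω j :=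
        ciInf_le (Set.finite_range _).bddBelow j
      have h3 : m ω = ⨅ j, (x j - U ω j) := rfl
      linarith [h3 ▸ h2]
  -- denominator formula
  have hDen : ∀ u : ℝ, ℙ {ω | u < ⨆ j, (E ω + U ω j)} = ∫⁻ ω, F (u - Q ω) ∂ℙ := by
    intro u
    have hSmeas : MeasurableSet {p : (Fin D → ℝ) × ℝ | u - ⨆ j, p.1 j < p.2} :=
      measurableSet_lt
        (measurable_const.sub (Measurable.iSup fun j => (measurable_pi_apply j).comp measurable_fst))
        measurable_snd
    have hset : {ω | u < ⨆ j, (E ω + U ω j)}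
        = (fun ω => (U ω, E ω)) ⁻¹' {p : (Fin D → ℝ) × ℝ | u - ⨆ j, p.1 j < p.2} := by
      rw [hBset u]; ext ω; simp [hQ]
    rw [hset, hkey _ hSmeas]
    refine lintegral_congr fun ω => ?_
    have hsec : {e : ℝ | (U ω, e) ∈ {p : (Fin D → ℝ) × ℝ | u - ⨆ j, p.1 j < p.2}}
        = Set.Ioi (u - Q ω) := by
      ext e; simp [hQ]
    rw [hsec, hν_Ioi]
  -- numerator formula
  have hNum : ∀ u : ℝ, ℙ ({ω | u < ⨆ j, (E ω + U ω j)} ∩ {ω | ∀ j, E ω + U ω j ≤ u + x j})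
      = ∫⁻ ω, (F (u - Q ω) - F (u + m ω)) ∂ℙ := by
    intro u
    have hSmeas : MeasurableSet {p : (Fin D → ℝ) × ℝ |
        u - ⨆ j, p.1 j < p.2 ∧ p.2 ≤ u + ⨅ j, (x j - p.1 j)} := by
      refine MeasurableSet.inter ?_ ?_
      · exact measurableSet_lt
          (measurable_const.sub (Measurable.iSup fun j => (measurable_pi_apply j).comp measurable_fst))
          measurable_snd
      · exact measurableSet_le measurable_snd
          (measurable_const.add (Measurable.iInf fun j =>
            measurable_const.sub ((measurable_pi_apply j).comp measurable_fst)))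
    have hset : {ω | u < ⨆ j, (E ω + U ω j)} ∩ {ω | ∀ j, E ω + U ω j ≤ u + x j}
        = (fun ω => (U ω, E ω)) ⁻¹' {p : (Fin D → ℝ) × ℝ |
            u - ⨆ j, p.1 j < p.2 ∧ p.2 ≤ u + ⨅ j, (x j - p.1 j)} := by
      ext ω
      simp only [Set.mem_inter_iff, Set.mem_setOf_eq, Set.mem_preimage]
      rw [← hQ ω]
      exact and_congr (hBiff u ω) (hAiff u ω)
    rw [hset, hkey _ hSmeas]
    refine lintegral_congr fun ω => ?_
    have hsec : {e : ℝ | (U ω, e) ∈ {p : (Fin D → ℝ) × ℝ |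
        u - ⨆ j, p.1 j < p.2 ∧ p.2 ≤ u + ⨅ j, (x j - p.1 j)}}
        = Set.Ioc (u - Q ω) (u + m ω) := by
      ext e; simp [hQ, Set.mem_Ioc, hm_def]
    rw [hsec, hν_Ioc]
  -- real-valued versions and limits
  have hFQmeas : ∀ u : ℝ, Measurable fun ω => F (u - Q ω) :=
    fun u => hF_meas.comp (measurable_const.sub hQm)
  have hFmmeas : ∀ u : ℝ, Measurable fun ω => F (u + m ω) :=
    fun u => hF_meas.comp (measurable_const.add hmm)
  have hI2pos : 0 < ∫ ω, Real.exp (Q ω) ∂ℙ := by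
    rw [integral_pos_iff_support_of_nonneg (fun ω => Real.exp_nonneg (Q ω)) hQint]
    have : Function.support (fun ω => Real.exp (Q ω)) = Set.univ :=
      Set.eq_univ_iff_forall.mpr fun ω => (Real.exp_pos _).ne'
    rw [this, measure_univ]; norm_num
  -- denominator limit
  have hden_lim : Tendsto (fun u : ℝ => Real.exp u * (∫⁻ ω, F (u - Q ω) ∂ℙ).toReal) atTop
      (nhds (∫ ω, Real.exp (Q ω) ∂ℙ)) := by
    have heq : ∀ u : ℝ, Real.exp u * (∫⁻ ω, F (u - Q ω) ∂ℙ).toReal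
        = ∫ ω, Real.exp u * Real.exp (-(max (u - Q ω) 0)) ∂ℙ := by
      intro u
      rw [← integral_toReal (hFQmeas u).aemeasurable
        (Filter.Eventually.of_forall fun ω => ENNReal.ofReal_lt_top), ← integral_const_mul]
      refine integral_congr_ae (Filter.Eventually.of_forall fun ω => ?_)
      rw [hF_def]; simp [ENNReal.toReal_ofReal (Real.exp_nonneg _)]
    rw [funext heq]
    refine tendsto_integral_filter_of_dominated_convergence (fun ω => Real.exp (Q ω)) ?_ ?_ hQint ?_
    · refine Filter.Eventually.of_forall fun u => Measurable.aestronglyMeasurable ?_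
      exact measurable_const.mul
        (Real.measurable_exp.comp ((measurable_const.sub hQm).max measurable_const).neg)
    · refine Filter.Eventually.of_forall fun u =>
        Filter.Eventually.of_forall fun ω => ?_
      rw [Real.norm_eq_abs, abs_of_nonneg (by positivity), ← Real.exp_add]
      exact Real.exp_le_exp.mpr (by linarith [le_max_left (u - Q ω) 0])
    · refine Filter.Eventually.of_forall fun ω => ?_
      refine Tendsto.congr' ?_ tendsto_const_nhds
      filter_upwards [eventually_ge_atTop (Q ω)] with u hu
      rw [max_eq_left (by linarith), ← Real.exp_add]
      congr 1; ring
  -- numerator limit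
  have hnum_lim : Tendsto
      (fun u : ℝ => Real.exp u * (∫⁻ ω, (F (u - Q ω) - F (u + m ω)) ∂ℙ).toReal) atTop
      (nhds (∫ ω, max (Real.exp (Q ω) - Real.exp (-(m ω))) 0 ∂ℙ)) := by
    have htr : ∀ (u : ℝ) ω, (F (u - Q ω) - F (u + m ω)).toReal
        = max (Real.exp (-(max (u - Q ω) 0)) - Real.exp (-(max (u + m ω) 0))) 0 := by
      intro u ω
      rw [hF_def]
      simp only []
      rw [← ENNReal.ofReal_sub _ (Real.exp_nonneg _), ENNReal.toReal_ofReal']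
    have heq : ∀ u : ℝ, Real.exp u * (∫⁻ ω, (F (u - Q ω) - F (u + m ω)) ∂ℙ).toReal
        = ∫ ω, Real.exp u *
            max (Real.exp (-(max (u - Q ω) 0)) - Real.exp (-(max (u + m ω) 0))) 0 ∂ℙ := by
      intro u
      rw [← integral_toReal (f := fun ω => F (u - Q ω) - F (u + m ω)) ((hFQmeas u).sub (hFmmeas u)).aemeasurable
        (Filter.Eventually.of_forall fun ω =>
          lt_of_le_of_lt tsub_le_self (by rw [hF_def]; exact ENNReal.ofReal_lt_top)),
        ← integral_const_mul]
      exact integral_congr_ae (Filter.Eventually.of_forall fun ω => by simp only [htr u ω])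
    rw [funext heq]
    refine tendsto_integral_filter_of_dominated_convergence (fun ω => Real.exp (Q ω)) ?_ ?_ hQint ?_
    · refine Filter.Eventually.of_forall fun u => Measurable.aestronglyMeasurable ?_
      refine measurable_const.mul (Measurable.max ?_ measurable_const)
      exact (Real.measurable_exp.comp ((measurable_const.sub hQm).max measurable_const).neg).sub
        (Real.measurable_exp.comp ((measurable_const.add hmm).max measurable_const).neg)
    · refine Filter.Eventually.of_forall fun u =>
        Filter.Eventually.of_forall fun ω => ?_
      rw [Real.norm_eq_abs, abs_of_nonneg (by positivity)]
      have h1 : max (Real.exp (-(max (u - Q ω) 0)) - Real.exp (-(max (u + m ω) 0))) 0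
          ≤ Real.exp (-(max (u - Q ω) 0)) :=
        max_le (by linarith [Real.exp_pos (-(max (u + m ω) 0))]) (Real.exp_nonneg _)
      calc Real.exp u * max (Real.exp (-(max (u - Q ω) 0)) - Real.exp (-(max (u + m ω) 0))) 0
          ≤ Real.exp u * Real.exp (-(max (u - Q ω) 0)) := by
            exact mul_le_mul_of_nonneg_left h1 (Real.exp_nonneg u)
        _ ≤ Real.exp (Q ω) := by
            rw [← Real.exp_add]
            exact Real.exp_le_exp.mpr (by linarith [le_max_left (u - Q ω) 0])
    · refine Filter.Eventually.of_forall fun ω => ?_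
      refine Tendsto.congr' ?_ tendsto_const_nhds
      filter_upwards [eventually_ge_atTop (Q ω), eventually_ge_atTop (-(m ω))] with u hu1 hu2
      rw [max_eq_left (by linarith : (0:ℝ) ≤ u - Q ω), max_eq_left (by linarith : (0:ℝ) ≤ u + m ω),
        mul_max_of_nonneg _ _ (Real.exp_nonneg u), mul_zero, mul_sub, ← Real.exp_add, ← Real.exp_add]
      congr 2 <;> ring
  -- assemble
  have heq2 : ∀ u : ℝ,
      (ℙ[{ω | ∀ j, E ω + U ω j ≤ u + x j} | {ω | u < ⨆ j, (E ω + U ω j)}]).toReal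
      = (Real.exp u * (∫⁻ ω, (F (u - Q ω) - F (u + m ω)) ∂ℙ).toReal) /
        (Real.exp u * (∫⁻ ω, F (u - Q ω) ∂ℙ).toReal) := by
    intro u
    have hBmeas : MeasurableSet {ω | u < ⨆ j, (E ω + U ω j)} := by
      rw [hBset u]; exact measurableSet_lt (measurable_const.sub hQm) hEmeas
    rw [cond_apply hBmeas, ENNReal.toReal_mul, ENNReal.toReal_inv, hNum u,
      mul_div_mul_left _ _ (ne_of_gt (Real.exp_pos u)), hDen u, inv_mul_eq_div]
  rw [funext heq2]
  exact hnum_lim.div hden_lim (ne_of_gt hI2pos)
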